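/- Let π₁, π₂ : [0,1] → ℝ be continuous strictly increasing and let (u₁ₙ), (u₂ₙ) ⊂ [0,1] with πₙ-type approximations: suppose π_{i,n} : [0,1] → ℝ are continuous strictly increasing with π_{1,n}(0) = π_{2,n}(0) → -∞, π_{1,n}(1) = π_{2,n}(1) → +∞, π_{i,n} → πᵢ uniformly on compact subsets of (0,1), π_{1,n}(u_{1,n}) = π_{2,n}(u_{2,n}) for all n, and u_{i,n} → uᵢ ∈ [0,1]. Then π̃₁(u₁) ∩ π̃₂(u₂) ≠ ∅, where π̃ᵢ is the monotone graph of πᵢ (π̃ᵢ(s) = {πᵢ(s)} on (0,1), π̃ᵢ(0) = (-∞, πᵢ(0)], π̃ᵢ(1) = [πᵢ(1), ∞)), provided the common values γₙ = π_{1,n}(u_{1,n}) converge in the extended reals ℝ̄. -/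

import Mathlib

open Set

open Classical in
/-- The monotone graph associated to a capillary pressure curve `π`:
`π̃(s) = {π s}` for `s ∈ (0,1)`, `π̃(0) = (-∞, π 0]`, `π̃(1) = [π 1, ∞)`. -/
noncomputable def tildeGraph (π : ℝ → ℝ) (s : ℝ) : Set ℝ :=
  if s = 0 then Set.Iic (π 0) else if s = 1 then Set.Ici (π 1) else {π s}

open Filter Topology

/-- Pointwise convergence at interior points from uniform convergence on compacts. -/
lemma aux_ptwise (π : ℝ → ℝ) (πn : ℕ → ℝ → ℝ)
    (hucomp : ∀ K ⊆ Set.Ioo (0:ℝ) 1, IsCompact K →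
      TendstoUniformlyOn (fun n => πn n) π atTop K)
    {s : ℝ} (hs : s ∈ Set.Ioo (0:ℝ) 1) :
    Tendsto (fun n => πn n s) atTop (𝓝 (π s)) := by
  have h := hucomp {s} (by simpa using hs) isCompact_singleton
  exact h.tendsto_at (Set.mem_singleton s)

/-- Composed convergence at interior limit points. -/
lemma aux_comp (π : ℝ → ℝ) (πn : ℕ → ℝ → ℝ)
    (hc : ContinuousOn π (Set.Icc 0 1))
    (hucomp : ∀ K ⊆ Set.Ioo (0:ℝ) 1, IsCompact K →
      TendstoUniformlyOn (fun n => πn n) π atTop K)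
    (un : ℕ → ℝ) {u : ℝ} (hu : u ∈ Set.Ioo (0:ℝ) 1)
    (hconv : Tendsto un atTop (𝓝 u)) :
    Tendsto (fun n => πn n (un n)) atTop (𝓝 (π u)) := by
  obtain ⟨h0, h1⟩ := hu
  have hK : Set.Icc (u/2) ((u+1)/2) ⊆ Set.Ioo (0:ℝ) 1 := by
    intro x hx
    exact ⟨lt_of_lt_of_le (by linarith) hx.1, lt_of_le_of_lt hx.2 (by linarith)⟩
  have hunif := hucomp _ hK isCompact_Icc
  have hcx : ContinuousWithinAt π (Set.Icc (u/2) ((u+1)/2)) u :=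
    (hc.mono (hK.trans Set.Ioo_subset_Icc_self)).continuousWithinAt
      ⟨by linarith, by linarith⟩
  apply hunif.tendsto_comp hcx
  rw [tendsto_nhdsWithin_iff]
  refine ⟨hconv, ?_⟩
  have : Set.Ioo (u/2) ((u+1)/2) ∈ 𝓝 u :=
    isOpen_Ioo.mem_nhds ⟨by linarith, by linarith⟩
  filter_upwards [hconv.eventually_mem this] with n hn
  exact Set.Ioo_subset_Icc_self hn

/-- If `un → 0` then the limit of `πn n (un n)` is at most `π 0`. -/
lemma aux_le (π : ℝ → ℝ) (πn : ℕ → ℝ → ℝ)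
    (hc : ContinuousOn π (Set.Icc 0 1))
    (hm : ∀ n, StrictMonoOn (πn n) (Set.Icc 0 1))
    (hucomp : ∀ K ⊆ Set.Ioo (0:ℝ) 1, IsCompact K →
      TendstoUniformlyOn (fun n => πn n) π atTop K)
    (un : ℕ → ℝ) (hun : ∀ n, un n ∈ Set.Icc (0:ℝ) 1)
    (hconv : Tendsto un atTop (𝓝 0)) (g : ℝ)
    (hg : Tendsto (fun n => πn n (un n)) atTop (𝓝 g)) : g ≤ π 0 := by
  have key : ∀ s ∈ Set.Ioo (0:ℝ) 1, g ≤ π s := by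
    intro s hs
    have hpt := aux_ptwise π πn hucomp hs
    refine le_of_tendsto_of_tendsto hg hpt ?_
    filter_upwards [hconv.eventually_lt_const hs.1] with n hn
    exact ((hm n).monotoneOn) (hun n) ⟨hs.1.le, hs.2.le⟩ hn.le
  have hmem : ∀ k : ℕ, (1:ℝ)/(k+2) ∈ Set.Ioo (0:ℝ) 1 := by
    intro k
    constructor
    · positivity
    · rw [div_lt_one (by positivity)]
      have : (0:ℝ) ≤ (k:ℝ) := Nat.cast_nonneg k
      linarith
  have hseq : Tendsto (fun k : ℕ => (1:ℝ)/(k+2)) atTop (𝓝 0) := by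
    have h : Tendsto (fun k : ℕ => ((k:ℝ)+2)) atTop atTop :=
      tendsto_atTop_add_const_right _ 2 tendsto_natCast_atTop_atTop
    simpa [one_div, Pi.inv_def] using h.inv_tendsto_atTop
  have hconts : Tendsto (fun k : ℕ => π ((1:ℝ)/(k+2))) atTop (𝓝 (π 0)) := by
    have hcw : ContinuousWithinAt π (Set.Icc 0 1) 0 :=
      hc.continuousWithinAt ⟨le_refl _, zero_le_one⟩
    apply hcw.tendsto.comp
    rw [tendsto_nhdsWithin_iff]
    exact ⟨hseq, Eventually.of_forall fun k => Set.Ioo_subset_Icc_self (hmem k)⟩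
  exact ge_of_tendsto hconts (Eventually.of_forall fun k => key _ (hmem k))

/-- If `un → 1` then the limit of `πn n (un n)` is at least `π 1`. -/
lemma aux_ge (π : ℝ → ℝ) (πn : ℕ → ℝ → ℝ)
    (hc : ContinuousOn π (Set.Icc 0 1))
    (hm : ∀ n, StrictMonoOn (πn n) (Set.Icc 0 1))
    (hucomp : ∀ K ⊆ Set.Ioo (0:ℝ) 1, IsCompact K →
      TendstoUniformlyOn (fun n => πn n) π atTop K)
    (un : ℕ → ℝ) (hun : ∀ n, un n ∈ Set.Icc (0:ℝ) 1)
    (hconv : Tendsto un atTop (𝓝 1)) (g : ℝ)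
    (hg : Tendsto (fun n => πn n (un n)) atTop (𝓝 g)) : π 1 ≤ g := by
  have key : ∀ s ∈ Set.Ioo (0:ℝ) 1, π s ≤ g := by
    intro s hs
    have hpt := aux_ptwise π πn hucomp hs
    refine le_of_tendsto_of_tendsto hpt hg ?_
    filter_upwards [hconv.eventually_const_lt hs.2] with n hn
    exact ((hm n).monotoneOn) ⟨hs.1.le, hs.2.le⟩ (hun n) hn.le
  have hmem : ∀ k : ℕ, 1 - (1:ℝ)/(k+2) ∈ Set.Ioo (0:ℝ) 1 := by
    intro k
    have h1 : (0:ℝ) < (1:ℝ)/(k+2) := by positivity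
    have h2 : (1:ℝ)/(k+2) < 1 := by
      rw [div_lt_one (by positivity)]
      have : (0:ℝ) ≤ (k:ℝ) := Nat.cast_nonneg k
      linarith
    constructor <;> linarith
  have hseq : Tendsto (fun k : ℕ => 1 - (1:ℝ)/(k+2)) atTop (𝓝 1) := by
    have h0 : Tendsto (fun k : ℕ => (1:ℝ)/(k+2)) atTop (𝓝 0) := by
      have h : Tendsto (fun k : ℕ => ((k:ℝ)+2)) atTop atTop :=
        tendsto_atTop_add_const_right _ 2 tendsto_natCast_atTop_atTop
      simpa [one_div, Pi.inv_def] using h.inv_tendsto_atTop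
    have := (tendsto_const_nhds (x := (1:ℝ)) (f := atTop (α := ℕ))).sub h0
    simpa using this
  have hconts : Tendsto (fun k : ℕ => π (1 - (1:ℝ)/(k+2))) atTop (𝓝 (π 1)) := by
    have hcw : ContinuousWithinAt π (Set.Icc 0 1) 1 :=
      hc.continuousWithinAt ⟨zero_le_one, le_refl _⟩
    apply hcw.tendsto.comp
    rw [tendsto_nhdsWithin_iff]
    exact ⟨hseq, Eventually.of_forall fun k => Set.Ioo_subset_Icc_self (hmem k)⟩
  exact le_of_tendsto hconts (Eventually.of_forall fun k => key _ (hmem k))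

/-- If the values tend to `-∞` then the limit saturation is `0`. -/
lemma aux_bot (π : ℝ → ℝ) (πn : ℕ → ℝ → ℝ)
    (hucomp : ∀ K ⊆ Set.Ioo (0:ℝ) 1, IsCompact K →
      TendstoUniformlyOn (fun n => πn n) π atTop K)
    (hm : ∀ n, StrictMonoOn (πn n) (Set.Icc 0 1))
    (un : ℕ → ℝ) (u : ℝ) (hun : ∀ n, un n ∈ Set.Icc (0:ℝ) 1)
    (hu : u ∈ Set.Icc (0:ℝ) 1) (hconv : Tendsto un atTop (𝓝 u))
    (hbot : Tendsto (fun n => πn n (un n)) atTop atBot) : u = 0 := by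
  by_contra h
  have hu0 : 0 < u := hu.1.lt_of_ne (Ne.symm h)
  have hs : u/2 ∈ Set.Ioo (0:ℝ) 1 := ⟨by linarith, by have := hu.2; linarith⟩
  have hpt := aux_ptwise π πn hucomp hs
  have hev1 : ∀ᶠ n in atTop, u/2 < un n := hconv.eventually_const_lt (by linarith)
  have hev2 : ∀ᶠ n in atTop, π (u/2) - 1 < πn n (u/2) :=
    hpt.eventually_const_lt (by linarith)
  have hev3 : ∀ᶠ n in atTop, πn n (un n) < π (u/2) - 1 :=
    hbot.eventually_lt_atBot _
  obtain ⟨n, h1, h2, h3⟩ := (hev1.and (hev2.and hev3)).exists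
  have : πn n (u/2) ≤ πn n (un n) :=
    ((hm n).monotoneOn) ⟨by linarith [hs.1], hs.2.le⟩ (hun n) h1.le
  linarith

/-- If the values tend to `+∞` then the limit saturation is `1`. -/
lemma aux_top (π : ℝ → ℝ) (πn : ℕ → ℝ → ℝ)
    (hucomp : ∀ K ⊆ Set.Ioo (0:ℝ) 1, IsCompact K →
      TendstoUniformlyOn (fun n => πn n) π atTop K)
    (hm : ∀ n, StrictMonoOn (πn n) (Set.Icc 0 1))
    (un : ℕ → ℝ) (u : ℝ) (hun : ∀ n, un n ∈ Set.Icc (0:ℝ) 1)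
    (hu : u ∈ Set.Icc (0:ℝ) 1) (hconv : Tendsto un atTop (𝓝 u))
    (htop : Tendsto (fun n => πn n (un n)) atTop atTop) : u = 1 := by
  by_contra h
  have hu1 : u < 1 := hu.2.lt_of_ne h
  have hs : (u+1)/2 ∈ Set.Ioo (0:ℝ) 1 := ⟨by have := hu.1; linarith, by linarith⟩
  have hpt := aux_ptwise π πn hucomp hs
  have hev1 : ∀ᶠ n in atTop, un n < (u+1)/2 := hconv.eventually_lt_const (by linarith)
  have hev2 : ∀ᶠ n in atTop, πn n ((u+1)/2) < π ((u+1)/2) + 1 :=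
    hpt.eventually_lt_const (by linarith)
  have hev3 : ∀ᶠ n in atTop, π ((u+1)/2) + 1 < πn n (un n) :=
    htop.eventually_gt_atTop _
  obtain ⟨n, h1, h2, h3⟩ := (hev1.and (hev2.and hev3)).exists
  have : πn n (un n) ≤ πn n ((u+1)/2) :=
    ((hm n).monotoneOn) (hun n) ⟨hs.1.le, hs.2.le⟩ h1.le
  linarith

/-- Membership of the limit value in the monotone graph. -/
lemma aux_mem (π : ℝ → ℝ) (πn : ℕ → ℝ → ℝ)
    (hc : ContinuousOn π (Set.Icc 0 1))
    (hm : ∀ n, StrictMonoOn (πn n) (Set.Icc 0 1))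
    (hucomp : ∀ K ⊆ Set.Ioo (0:ℝ) 1, IsCompact K →
      TendstoUniformlyOn (fun n => πn n) π atTop K)
    (un : ℕ → ℝ) (u : ℝ) (hun : ∀ n, un n ∈ Set.Icc (0:ℝ) 1)
    (hu : u ∈ Set.Icc (0:ℝ) 1) (hconv : Tendsto un atTop (𝓝 u)) (g : ℝ)
    (hg : Tendsto (fun n => πn n (un n)) atTop (𝓝 g)) :
    g ∈ tildeGraph π u := by
  rcases eq_or_ne u 0 with h0 | h0
  · subst h0
    simp only [tildeGraph, if_pos rfl, Set.mem_Iic]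
    exact aux_le π πn hc hm hucomp un hun hconv g hg
  rcases eq_or_ne u 1 with h1 | h1
  · subst h1
    simp only [tildeGraph, if_neg one_ne_zero, if_pos rfl, Set.mem_Ici]
    exact aux_ge π πn hc hm hucomp un hun hconv g hg
  · have hu' : u ∈ Set.Ioo (0:ℝ) 1 := ⟨hu.1.lt_of_ne (Ne.symm h0), hu.2.lt_of_ne h1⟩
    have hcomp := aux_comp π πn hc hucomp un hu' hconv
    have hgu : g = π u := tendsto_nhds_unique hg hcomp
    simp [tildeGraph, h0, h1, hgu]

/-- Passage to the limit in the transmission condition: if the approximate capillary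
pressures `π_{i,n}` satisfy `π_{1,n}(u_{1,n}) = π_{2,n}(u_{2,n})`, converge suitably
to `πᵢ`, and `u_{i,n} → uᵢ`, then `π̃₁(u₁) ∩ π̃₂(u₂) ≠ ∅`, provided the common values
`γₙ = π_{1,n}(u_{1,n})` converge in `ℝ̄`. -/
theorem limit_transmission_condition (π₁ π₂ : ℝ → ℝ) (π₁n π₂n : ℕ → ℝ → ℝ)
    (h1c : ContinuousOn π₁ (Set.Icc 0 1)) (h1m : StrictMonoOn π₁ (Set.Icc 0 1))
    (h2c : ContinuousOn π₂ (Set.Icc 0 1)) (h2m : StrictMonoOn π₂ (Set.Icc 0 1))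
    (hnc : ∀ n, ContinuousOn (π₁n n) (Set.Icc 0 1) ∧ ContinuousOn (π₂n n) (Set.Icc 0 1))
    (hnm : ∀ n, StrictMonoOn (π₁n n) (Set.Icc 0 1) ∧ StrictMonoOn (π₂n n) (Set.Icc 0 1))
    (hend0 : ∀ n, π₁n n 0 = π₂n n 0)
    (hend1 : ∀ n, π₁n n 1 = π₂n n 1)
    (h0bot : Tendsto (fun n => π₁n n 0) atTop atBot)
    (h1top : Tendsto (fun n => π₁n n 1) atTop atTop)
    (hucomp1 : ∀ K ⊆ Set.Ioo (0:ℝ) 1, IsCompact K →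
      TendstoUniformlyOn (fun n => π₁n n) π₁ atTop K)
    (hucomp2 : ∀ K ⊆ Set.Ioo (0:ℝ) 1, IsCompact K →
      TendstoUniformlyOn (fun n => π₂n n) π₂ atTop K)
    (u₁n u₂n : ℕ → ℝ) (u₁ u₂ : ℝ)
    (hu₁n : ∀ n, u₁n n ∈ Set.Icc (0:ℝ) 1) (hu₂n : ∀ n, u₂n n ∈ Set.Icc (0:ℝ) 1)
    (heq : ∀ n, π₁n n (u₁n n) = π₂n n (u₂n n))
    (hu₁ : u₁ ∈ Set.Icc (0:ℝ) 1) (hu₂ : u₂ ∈ Set.Icc (0:ℝ) 1)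
    (hconv1 : Tendsto u₁n atTop (𝓝 u₁)) (hconv2 : Tendsto u₂n atTop (𝓝 u₂))
    (γ : EReal) (hγ : Tendsto (fun n => ((π₁n n (u₁n n) : ℝ) : EReal)) atTop (𝓝 γ)) :
    (tildeGraph π₁ u₁ ∩ tildeGraph π₂ u₂).Nonempty := by
  have h1m' : ∀ n, StrictMonoOn (π₁n n) (Set.Icc 0 1) := fun n => (hnm n).1
  have h2m' : ∀ n, StrictMonoOn (π₂n n) (Set.Icc 0 1) := fun n => (hnm n).2
  induction γ with
  | bot =>
    have hbot1 : Tendsto (fun n => π₁n n (u₁n n)) atTop atBot := by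
      rw [tendsto_atBot]
      intro b
      filter_upwards [(EReal.tendsto_nhds_bot_iff_real.1 hγ) b] with n hn
      exact le_of_lt (by exact_mod_cast hn)
    have hbot2 : Tendsto (fun n => π₂n n (u₂n n)) atTop atBot := by
      refine hbot1.congr fun n => heq n
    have hu10 : u₁ = 0 := aux_bot π₁ π₁n hucomp1 h1m' u₁n u₁ hu₁n hu₁ hconv1 hbot1
    have hu20 : u₂ = 0 := aux_bot π₂ π₂n hucomp2 h2m' u₂n u₂ hu₂n hu₂ hconv2 hbot2
    subst hu10; subst hu20
    exact ⟨min (π₁ 0) (π₂ 0), by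
      simp [tildeGraph, min_le_left, min_le_right]⟩
  | top =>
    have htop1 : Tendsto (fun n => π₁n n (u₁n n)) atTop atTop := by
      rw [tendsto_atTop]
      intro b
      filter_upwards [(EReal.tendsto_nhds_top_iff_real.1 hγ) b] with n hn
      exact le_of_lt (by exact_mod_cast hn)
    have htop2 : Tendsto (fun n => π₂n n (u₂n n)) atTop atTop := by
      refine htop1.congr fun n => heq n
    have hu11 : u₁ = 1 := aux_top π₁ π₁n hucomp1 h1m' u₁n u₁ hu₁n hu₁ hconv1 htop1
    have hu21 : u₂ = 1 := aux_top π₂ π₂n hucomp2 h2m' u₂n u₂ hu₂n hu₂ hconv2 htop2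
    subst hu11; subst hu21
    exact ⟨max (π₁ 1) (π₂ 1), by
      simp [tildeGraph, le_max_left, le_max_right]⟩
  | coe g =>
    have hg1 : Tendsto (fun n => π₁n n (u₁n n)) atTop (𝓝 g) :=
      EReal.tendsto_coe.1 hγ
    have hg2 : Tendsto (fun n => π₂n n (u₂n n)) atTop (𝓝 g) :=
      hg1.congr fun n => heq n
    exact ⟨g, aux_mem π₁ π₁n h1c h1m' hucomp1 u₁n u₁ hu₁n hu₁ hconv1 g hg1,
      aux_mem π₂ π₂n h2c h2m' hucomp2 u₂n u₂ hu₂n hu₂ hconv2 g hg2⟩
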